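/- For every ζ > 0 and every real t, one has |χ(t + iζ)| ≤ χ(iζ) · |χ(t)|^{exp(−ζ/r^{d/2})}, where χ(iζ) = exp( d₁ r^d ∫₀¹ (e^{−ζu/r^{d/2}} − 1 + ζu/r^{d/2}) u^{−1−d/γ} du ) is a positive real number. (Lemma 2.3(ii).) -/

import Mathlib

open MeasureTheory

noncomputable section


lemma chi_aux_integrable (ρ p : ℝ) (hρ : 0 < ρ) (hp : (-1:ℝ) < p + 1) (z : ℂ) :
    IntervalIntegrable (fun u : ℝ =>
      (Complex.exp (Complex.I * z * (u : ℂ) / ((ρ : ℝ) : ℂ)) - 1 -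
          Complex.I * z * (u : ℂ) / ((ρ : ℝ) : ℂ)) * ((u ^ p : ℝ) : ℂ))
      volume 0 1 := by
  set M : ℝ := ‖z‖ / ρ with hMdef
  have hM0 : 0 ≤ M := div_nonneg (norm_nonneg _) hρ.le
  have hbd : IntervalIntegrable (fun u : ℝ => ((Real.exp M + 3) * M) * u ^ (p + 1)) volume 0 1 :=
    (intervalIntegral.intervalIntegrable_rpow' hp).const_mul _
  apply hbd.mono_fun
  · apply Measurable.aestronglyMeasurable
    fun_prop
  · rw [Set.uIoc_of_le (by norm_num : (0:ℝ) ≤ 1)]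
    filter_upwards [ae_restrict_mem measurableSet_Ioc] with u hu
    obtain ⟨hu0, hu1⟩ := hu
    set w : ℂ := Complex.I * z * (u : ℂ) / ((ρ : ℝ) : ℂ) with hwdef
    have habsw : ‖w‖ = ‖z‖ * u / ρ := by
      simp [hwdef, norm_div, norm_mul, Complex.norm_real, abs_of_pos hu0, abs_of_pos hρ]
    have hwM : ‖w‖ ≤ M := by
      rw [habsw, hMdef]
      have h1 : ‖z‖ * u ≤ ‖z‖ * 1 :=
        mul_le_mul_of_nonneg_left hu1 (norm_nonneg _)
      have := div_le_div_of_nonneg_right (c := ρ) h1 hρ.le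
      simpa using this
    have hexp1 : ‖Complex.exp w - 1‖ ≤ (Real.exp M + 2) * ‖w‖ := by
      rcases le_or_gt ‖w‖ 1 with h | h
      · have := Complex.norm_exp_sub_one_le h
        nlinarith [Real.exp_pos M, norm_nonneg w]
      · have h2 : ‖Complex.exp w - 1‖ ≤ Real.exp M + 1 := by
          calc ‖Complex.exp w - 1‖ ≤ ‖Complex.exp w‖ + 1 := by
                simpa using norm_sub_le (Complex.exp w) 1
            _ ≤ Real.exp M + 1 := by
                rw [Complex.norm_exp]
                have : w.re ≤ M := (Complex.re_le_norm w).trans hwM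
                simpa using Real.exp_le_exp.mpr this
        nlinarith [Real.exp_pos M]
    have hg : ‖Complex.exp w - 1 - w‖ ≤ (Real.exp M + 3) * ‖w‖ := by
      calc ‖Complex.exp w - 1 - w‖
          ≤ ‖Complex.exp w - 1‖ + ‖w‖ := norm_sub_le _ _
        _ ≤ (Real.exp M + 3) * ‖w‖ := by nlinarith [norm_nonneg w]
    have hup : (0:ℝ) ≤ u ^ p := Real.rpow_nonneg hu0.le p
    have hK0 : (0:ℝ) ≤ (Real.exp M + 3) * M := by nlinarith [Real.exp_pos M]
    calc ‖(Complex.exp w - 1 - w) * ((u ^ p : ℝ) : ℂ)‖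
        = ‖Complex.exp w - 1 - w‖ * (u ^ p) := by
          rw [norm_mul, Complex.norm_real, Real.norm_eq_abs,
            abs_of_nonneg hup]
      _ ≤ ((Real.exp M + 3) * (M * u)) * (u ^ p) := by
          have habsw' : ‖w‖ = M * u := by rw [habsw, hMdef]; ring
          rw [← habsw']
          exact mul_le_mul_of_nonneg_right hg hup
      _ = ((Real.exp M + 3) * M) * (u ^ (p+1)) := by
          rw [Real.rpow_add_one hu0.ne']
          ring
      _ ≤ ‖((Real.exp M + 3) * M) * u ^ (p + 1)‖ := le_abs_self _


/-- ρ = r^{d/2} -/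
def rho (d : ℕ) (r : ℝ) : ℝ := r ^ ((d : ℝ) / 2)

/-- χ(z) = exp( d₁ r^d ∫₀¹ (e^{izu/r^{d/2}} − 1 − izu/r^{d/2}) u^{−1−d/γ} du ) -/
def chiC (d : ℕ) (γ r : ℝ) (z : ℂ) : ℂ :=
  Complex.exp ((((2 - (d : ℝ) / γ) * r ^ d : ℝ) : ℂ) *
    ∫ u in (0:ℝ)..1,
      (Complex.exp (Complex.I * z * (u : ℂ) / ((rho d r : ℝ) : ℂ)) - 1 -
          Complex.I * z * (u : ℂ) / ((rho d r : ℝ) : ℂ)) *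
        ((u ^ (-1 - (d : ℝ) / γ) : ℝ) : ℂ))

/-- Lemma 2.3(ii): |χ(t + iζ)| ≤ χ(iζ)·|χ(t)|^{exp(−ζ/r^{d/2})} for ζ > 0, where χ(iζ) is the
positive real number exp( d₁ r^d ∫₀¹ (e^{−ζu/r^{d/2}} − 1 + ζu/r^{d/2}) u^{−1−d/γ} du ). -/
theorem chi_shift_up (d : ℕ) (hd : 1 ≤ d) (γ : ℝ) (hγ : (d : ℝ) < γ)
    (r : ℝ) (hr : 1 ≤ r) (ζ : ℝ) (hζ : 0 < ζ) (t : ℝ) :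
    chiC d γ r (Complex.I * (ζ : ℂ)) =
      ((Real.exp ((2 - (d : ℝ) / γ) * r ^ d *
        ∫ u in (0:ℝ)..1,
          (Real.exp (-ζ * u / rho d r) - 1 + ζ * u / rho d r) *
            u ^ (-1 - (d : ℝ) / γ)) : ℝ) : ℂ) ∧
    ‖chiC d γ r ((t : ℂ) + Complex.I * (ζ : ℂ))‖ ≤
      Real.exp ((2 - (d : ℝ) / γ) * r ^ d *
        ∫ u in (0:ℝ)..1,
          (Real.exp (-ζ * u / rho d r) - 1 + ζ * u / rho d r) *
            u ^ (-1 - (d : ℝ) / γ)) *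
      ‖chiC d γ r (t : ℂ)‖ ^ Real.exp (-ζ / rho d r) := by
  
  have hγ0 : (0:ℝ) < γ := lt_of_le_of_lt (Nat.cast_nonneg d) hγ
  have hdγ : (d:ℝ)/γ < 1 := (div_lt_one hγ0).mpr hγ
  have hdγ0 : (0:ℝ) ≤ (d:ℝ)/γ := div_nonneg (Nat.cast_nonneg d) hγ0.le
  have hr0 : (0:ℝ) < r := lt_of_lt_of_le one_pos hr
  have hρ : 0 < rho d r := Real.rpow_pos_of_pos hr0 _
  have hp : (-1:ℝ) < (-1 - (d:ℝ)/γ) + 1 := by linarith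
  have hc : (0:ℝ) ≤ (2 - (d:ℝ)/γ) * r ^ d :=
    mul_nonneg (by linarith) (pow_nonneg hr0.le d)
  set p : ℝ := -1 - (d:ℝ)/γ with hpdef
  set F : ℂ → ℝ → ℂ := fun z u =>
    (Complex.exp (Complex.I * z * (u : ℂ) / ((rho d r : ℝ) : ℂ)) - 1 -
        Complex.I * z * (u : ℂ) / ((rho d r : ℝ) : ℂ)) * ((u ^ p : ℝ) : ℂ) with hFdef
  have hInt : ∀ z : ℂ, IntervalIntegrable (F z) volume 0 1 := fun z =>
    chi_aux_integrable (rho d r) p hρ hp z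
  have hIntRe : ∀ z : ℂ, IntervalIntegrable (fun u => (F z u).re) volume 0 1 := fun z =>
    ⟨(hInt z).1.re, (hInt z).2.re⟩
  have key : ∀ u : ℝ, F (Complex.I * (ζ:ℂ)) u =
      (((Real.exp (-ζ * u / rho d r) - 1 + ζ * u / rho d r) * u ^ p : ℝ) : ℂ) := by
    intro u
    have hw : Complex.I * (Complex.I * (ζ:ℂ)) * (u:ℂ) / ((rho d r : ℝ) : ℂ) =
        ((-ζ * u / rho d r : ℝ) : ℂ) := by
      rw [← mul_assoc, Complex.I_mul_I]
      push_cast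
      ring
    rw [hFdef]
    simp only [hw, ← Complex.ofReal_exp]
    push_cast
    ring
  have h1 : chiC d γ r (Complex.I * (ζ:ℂ)) =
      ((Real.exp ((2 - (d : ℝ) / γ) * r ^ d *
        ∫ u in (0:ℝ)..1,
          (Real.exp (-ζ * u / rho d r) - 1 + ζ * u / rho d r) * u ^ p) : ℝ) : ℂ) := by
    unfold chiC
    rw [intervalIntegral.integral_congr (g := fun u : ℝ =>
        (((Real.exp (-ζ * u / rho d r) - 1 + ζ * u / rho d r) * u ^ p : ℝ) : ℂ))
        (fun u _ => key u)]
    rw [intervalIntegral.integral_ofReal, ← Complex.ofReal_mul, Complex.ofReal_exp]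
  refine ⟨h1, ?_⟩
  have habs : ∀ z : ℂ, ‖chiC d γ r z‖ =
      Real.exp ((2 - (d : ℝ) / γ) * r ^ d * ∫ u in (0:ℝ)..1, (F z u).re) := by
    intro z
    unfold chiC
    rw [Complex.norm_exp]
    congr 1
    have hcomm := Complex.reCLM.intervalIntegral_comp_comm (hInt z)
    simp only [Complex.reCLM_apply] at hcomm
    rw [Complex.re_ofReal_mul, ← hcomm]
  -- real-part formulas
  have hre_t : ∀ u : ℝ, (F (t:ℂ) u).re = (Real.cos (t*u/rho d r) - 1) * u ^ p := by
    intro u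
    rw [hFdef]
    simp [Complex.exp_re, Complex.div_ofReal_re, Complex.div_ofReal_im]
  have hre_tζ : ∀ u : ℝ, (F ((t:ℂ) + Complex.I * (ζ:ℂ)) u).re =
      (Real.exp (-(ζ*u/rho d r)) * Real.cos (t*u/rho d r) - 1 + ζ*u/rho d r) * u ^ p := by
    intro u
    rw [hFdef]
    simp [Complex.exp_re, Complex.div_ofReal_re, Complex.div_ofReal_im]
    try ring
    try exact Or.inl trivial
  have hre_ζ : ∀ u : ℝ, (F (Complex.I * (ζ:ℂ)) u).re =
      (Real.exp (-ζ * u / rho d r) - 1 + ζ * u / rho d r) * u ^ p := by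
    intro u
    rw [key u, Complex.ofReal_re]
  rw [habs ((t:ℂ) + Complex.I * (ζ:ℂ)), habs (t:ℂ), ← Real.exp_mul, ← Real.exp_add]
  apply Real.exp_le_exp.mpr
  have hIa : (∫ u in (0:ℝ)..1,
      (Real.exp (-ζ * u / rho d r) - 1 + ζ * u / rho d r) * u ^ p) =
      ∫ u in (0:ℝ)..1, (F (Complex.I * (ζ:ℂ)) u).re :=
    intervalIntegral.integral_congr (fun u _ => (hre_ζ u).symm)
  set α : ℝ := Real.exp (-ζ / rho d r) with hαdef
  have hineq : (∫ u in (0:ℝ)..1, (F ((t:ℂ) + Complex.I * (ζ:ℂ)) u).re) ≤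
      (∫ u in (0:ℝ)..1, (F (Complex.I * (ζ:ℂ)) u).re) +
      α * ∫ u in (0:ℝ)..1, (F (t:ℂ) u).re := by
    rw [← intervalIntegral.integral_const_mul,
      ← intervalIntegral.integral_add (hIntRe _) ((hIntRe _).const_mul α)]
    apply intervalIntegral.integral_mono_on (by norm_num) (hIntRe _)
      ((hIntRe _).add ((hIntRe _).const_mul α))
    intro u hu
    obtain ⟨hu0, hu1⟩ := hu
    show (F ((t:ℂ) + Complex.I * (ζ:ℂ)) u).re ≤
      (F (Complex.I * (ζ:ℂ)) u).re + α * (F (t:ℂ) u).re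
    rw [hre_tζ u, hre_ζ u, hre_t u]
    have hup : (0:ℝ) ≤ u ^ p := Real.rpow_nonneg hu0 _
    have hcos : Real.cos (t*u/rho d r) ≤ 1 := Real.cos_le_one _
    have hαle : α ≤ Real.exp (-(ζ*u/rho d r)) := by
      rw [hαdef]
      apply Real.exp_le_exp.mpr
      have h1 : ζ * u ≤ ζ * 1 := mul_le_mul_of_nonneg_left hu1 hζ.le
      have h2 : ζ * u / rho d r ≤ ζ / rho d r := by
        have := div_le_div_of_nonneg_right (c := rho d r) h1 hρ.le
        simpa using this
      have h3 : -ζ / rho d r = -(ζ / rho d r) := neg_div _ _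
      linarith
    have heq : -ζ * u / rho d r = -(ζ*u/rho d r) := by ring
    rw [heq]
    have keyprod : 0 ≤ (Real.exp (-(ζ*u/rho d r)) - α) * (1 - Real.cos (t*u/rho d r)) * u ^ p :=
      mul_nonneg (mul_nonneg (by linarith) (by linarith)) hup
    nlinarith [keyprod]
  rw [hIa]
  nlinarith [mul_le_mul_of_nonneg_left hineq hc]
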